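/- Let w ∈ C²([0,1]) satisfy -w'' + w^p = γ w on (0,1), w > 0 on (0,1), w(0) = w(1) = 0, with p > 1, γ > 0. Then w'(x) > 0 for all x ∈ (0, 1/2), and consequently the maximum of w on [0,1] is attained at x = 1/2. -/

import Mathlib

open Set Filter Topology

/-- Positive logistic solutions are strictly increasing on (0,1/2) and attain their
    maximum on [0,1] at x = 1/2. -/
theorem stmt_1 (p γ : ℝ) (hp : 1 < p) (hγ : 0 < γ)
    (w : ℝ → ℝ) (hw : ContDiffOn ℝ 2 w (Icc 0 1))
    (heq : ∀ x ∈ Ioo (0:ℝ) 1, -(deriv (deriv w) x) + w x ^ p = γ * w x)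
    (hpos : ∀ x ∈ Ioo (0:ℝ) 1, 0 < w x)
    (hb0 : w 0 = 0) (hb1 : w 1 = 0) :
    (∀ x ∈ Ioo (0:ℝ) (1/2), 0 < deriv w x) ∧
    (∀ x ∈ Icc (0:ℝ) 1, w x ≤ w (1/2)) := by
  have hwc : ContinuousOn w (Icc 0 1) := hw.continuousOn
  -- nonnegativity on [0,1]
  have hw0 : ∀ x ∈ Icc (0:ℝ) 1, 0 ≤ w x := by
    intro x hx
    rcases eq_or_lt_of_le hx.1 with h | h
    · rw [← h, hb0]
    rcases eq_or_lt_of_le hx.2 with h' | h'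
    · rw [h', hb1]
    · exact (hpos x ⟨h, h'⟩).le
  -- a bound for w on [0,1]
  obtain ⟨C, hC⟩ := isCompact_Icc.exists_bound_of_continuousOn hwc
  have hC0 : (0:ℝ) ≤ C := le_trans (norm_nonneg _) (hC 0 ⟨le_rfl, zero_le_one⟩)
  have hwleC : ∀ x ∈ Icc (0:ℝ) 1, w x ≤ C := fun x hx =>
    (le_abs_self _).trans ((Real.norm_eq_abs _) ▸ hC x hx)
  -- the vector field and its Lipschitz property
  set S : Set (ℝ × ℝ) := (Icc 0 C) ×ˢ (univ : Set ℝ) with hSdef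
  have hL0 : 0 ≤ p * C ^ (p-1) + γ := by
    have := Real.rpow_nonneg hC0 (p-1); nlinarith
  set L : NNReal := ⟨p * C ^ (p-1) + γ, hL0⟩ with hLdef
  have hφ : LipschitzOnWith L (fun u : ℝ => u ^ p - γ * u) (Icc 0 C) := by
    apply (convex_Icc 0 C).lipschitzOnWith_of_nnnorm_hasDerivWithin_le
      (f' := fun u => p * u ^ (p-1) - γ)
    · intro u hu
      have h1 : HasDerivAt (fun u : ℝ => u ^ p) (p * u ^ (p-1)) u :=
        Real.hasDerivAt_rpow_const (Or.inr hp.le)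
      have h2 : HasDerivAt (fun u : ℝ => γ * u) γ u := by
        simpa using (hasDerivAt_id u).const_mul γ
      exact (h1.sub h2).hasDerivWithinAt
    · intro u hu
      rw [← NNReal.coe_le_coe, coe_nnnorm, Real.norm_eq_abs]
      have h1 : 0 ≤ u ^ (p-1) := Real.rpow_nonneg hu.1 _
      have h2 : u ^ (p-1) ≤ C ^ (p-1) := Real.rpow_le_rpow hu.1 hu.2 (by linarith)
      have hLc : (L : ℝ) = p * C ^ (p-1) + γ := rfl
      rw [hLc, abs_le]
      constructor <;> nlinarith
  have hvlip : LipschitzOnWith (max 1 (L * 1))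
      (fun q : ℝ × ℝ => (q.2, q.1 ^ p - γ * q.1)) S :=
    (LipschitzWith.prod_snd.lipschitzOnWith).prodMk
      (hφ.comp (LipschitzWith.prod_fst.lipschitzOnWith) (fun q hq => hq.1))
  -- derivative infrastructure on (0,1)
  have hd1 : ∀ t ∈ Ioo (0:ℝ) 1, HasDerivAt w (deriv w t) t := fun t ht =>
    ((hw.contDiffAt (Icc_mem_nhds ht.1 ht.2)).differentiableAt (by norm_num)).hasDerivAt
  have hw2 : ContDiffOn ℝ 2 w (Ioo 0 1) := hw.mono Ioo_subset_Icc_self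
  have hw' : ContDiffOn ℝ 1 (deriv w) (Ioo 0 1) :=
    hw2.deriv_of_isOpen isOpen_Ioo (by norm_num)
  have hd2 : ∀ t ∈ Ioo (0:ℝ) 1, HasDerivAt (deriv w) (deriv (deriv w) t) t := fun t ht =>
    ((hw'.contDiffAt (isOpen_Ioo.mem_nhds ht)).differentiableAt one_ne_zero).hasDerivAt
  have hcontd : ContinuousOn (deriv w) (Ioo (0:ℝ) 1) := hw'.continuousOn
  have hd2eq : ∀ t ∈ Ioo (0:ℝ) 1, deriv (deriv w) t = w t ^ p - γ * w t := by
    intro t ht; have := heq t ht; linarith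
  have hmemS : ∀ t ∈ Ioo (0:ℝ) 1, ∀ y : ℝ, (w t, y) ∈ S := by
    intro t ht y
    exact ⟨⟨hw0 t (Ioo_subset_Icc_self ht), hwleC t (Ioo_subset_Icc_self ht)⟩, trivial⟩
  -- symmetry about a critical point, via ODE uniqueness
  have sym : ∀ x₁ a b : ℝ, 0 ≤ a → b ≤ 1 → x₁ ∈ Ioo a b →
      (∀ t ∈ Ioo a b, 2*x₁ - t ∈ Ioo a b) → deriv w x₁ = 0 →
      ∀ t ∈ Ioo a b, w t = w (2*x₁ - t) := by
    intro x₁ a b ha hb hx₁ hmap hcrit t ht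
    have hsub : Ioo a b ⊆ Ioo (0:ℝ) 1 := Ioo_subset_Ioo ha hb
    have key := ODE_solution_unique_of_mem_Ioo
      (v := fun (_ : ℝ) (q : ℝ × ℝ) => (q.2, q.1 ^ p - γ * q.1)) (s := fun _ => S)
      (K := max 1 (L * 1)) (fun _ _ => hvlip) (t₀ := x₁) (a := a) (b := b)
      (f := fun t => (w t, deriv w t))
      (g := fun t => (w (2*x₁ - t), -deriv w (2*x₁ - t)))
      hx₁ ?_ ?_ ?_
    · exact congrArg Prod.fst (key ht)
    · intro τ hτ
      have hτ' := hsub hτ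
      refine ⟨?_, hmemS τ hτ' _⟩
      have h := (hd1 τ hτ').prodMk (hd2 τ hτ')
      simp only
      rwa [hd2eq τ hτ'] at h
    · intro τ hτ
      have hστ := hsub (hmap τ hτ)
      have hσ : HasDerivAt (fun t : ℝ => 2*x₁ - t) (-1) τ := by
        simpa using (hasDerivAt_id τ).const_sub (2*x₁)
      refine ⟨?_, hmemS _ hστ _⟩
      simp only
      refine HasDerivAt.prodMk ?_ ?_
      · have h := (hd1 _ hστ).comp τ hσ
        simpa [Function.comp_def] using h
      · have h := ((hd2 _ hστ).comp τ hσ).neg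
        rw [hd2eq _ hστ] at h
        simpa [Function.comp_def, Pi.neg_def] using h
    · show (w x₁, deriv w x₁) = (w (2*x₁ - x₁), -deriv w (2*x₁ - x₁))
      rw [show 2*x₁ - x₁ = x₁ by ring, hcrit]
      norm_num
  -- no critical point away from 1/2
  have nocrit : ∀ x₁ ∈ Ioo (0:ℝ) 1, x₁ ≠ 1/2 → deriv w x₁ ≠ 0 := by
    intro x₁ hx₁ hne hcrit
    rcases lt_or_gt_of_ne hne with hlt | hgt
    · -- x₁ < 1/2 : symmetry on (0, 2x₁), contradiction at 2x₁
      have hb1' : 2*x₁ < 1 := by linarith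
      have hsym := sym x₁ 0 (2*x₁) le_rfl hb1'.le ⟨hx₁.1, by linarith [hx₁.1]⟩
        (fun t ht => ⟨by linarith [ht.2], by linarith [ht.1]⟩) hcrit
      have hbI : (2*x₁) ∈ Ioo (0:ℝ) 1 := ⟨by linarith [hx₁.1], hb1'⟩
      have hnb : (𝓝[Ioo x₁ (2*x₁)] (2*x₁)).NeBot := by
        apply mem_closure_iff_nhdsWithin_neBot.mp
        rw [closure_Ioo (by linarith [hx₁.1] : x₁ ≠ 2*x₁)]
        exact ⟨by linarith [hx₁.1], le_rfl⟩
      have h1 : Tendsto w (𝓝[Ioo x₁ (2*x₁)] (2*x₁)) (𝓝 (w (2*x₁))) :=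
        (hwc.continuousAt (Icc_mem_nhds hbI.1 hbI.2)).continuousWithinAt
      have hσt : Tendsto (fun t : ℝ => 2*x₁ - t) (𝓝[Ioo x₁ (2*x₁)] (2*x₁)) (𝓝[Icc 0 1] 0) := by
        rw [tendsto_nhdsWithin_iff]
        constructor
        · have h : Tendsto (fun t : ℝ => 2*x₁ - t) (𝓝 (2*x₁)) (𝓝 (2*x₁ - 2*x₁)) :=
            tendsto_const_nhds.sub tendsto_id
          rw [show 2*x₁ - 2*x₁ = 0 by ring] at h
          exact h.mono_left nhdsWithin_le_nhds
        · filter_upwards [self_mem_nhdsWithin] with t ht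
          exact ⟨by linarith [ht.2], by linarith [ht.1, hx₁.1]⟩
      have h2 : Tendsto (fun t : ℝ => w (2*x₁ - t)) (𝓝[Ioo x₁ (2*x₁)] (2*x₁)) (𝓝 0) := by
        have hc0 : Tendsto w (𝓝[Icc (0:ℝ) 1] 0) (𝓝 (w 0)) :=
          hwc 0 ⟨le_rfl, zero_le_one⟩
        rw [hb0] at hc0
        exact hc0.comp hσt
      have h1' : Tendsto w (𝓝[Ioo x₁ (2*x₁)] (2*x₁)) (𝓝 0) := by
        refine h2.congr' ?_
        filter_upwards [self_mem_nhdsWithin] with t ht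
        exact (hsym t ⟨by linarith [ht.1, hx₁.1], ht.2⟩).symm
      exact absurd (tendsto_nhds_unique h1 h1') (ne_of_gt (hpos _ hbI))
    · -- x₁ > 1/2 : symmetry on (2x₁-1, 1), contradiction at 2x₁-1
      have ha0 : 0 < 2*x₁ - 1 := by linarith
      have hsym := sym x₁ (2*x₁ - 1) 1 ha0.le le_rfl ⟨by linarith [hx₁.2], hx₁.2⟩
        (fun t ht => ⟨by linarith [ht.2], by linarith [ht.1]⟩) hcrit
      have haI : (2*x₁ - 1) ∈ Ioo (0:ℝ) 1 := ⟨ha0, by linarith [hx₁.2]⟩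
      have hnb : (𝓝[Ioo (2*x₁-1) x₁] (2*x₁-1)).NeBot := by
        apply mem_closure_iff_nhdsWithin_neBot.mp
        rw [closure_Ioo (by linarith [hx₁.2] : 2*x₁-1 ≠ x₁)]
        exact ⟨le_rfl, by linarith [hx₁.2]⟩
      have h1 : Tendsto w (𝓝[Ioo (2*x₁-1) x₁] (2*x₁-1)) (𝓝 (w (2*x₁-1))) :=
        (hwc.continuousAt (Icc_mem_nhds haI.1 haI.2)).continuousWithinAt
      have hσt : Tendsto (fun t : ℝ => 2*x₁ - t) (𝓝[Ioo (2*x₁-1) x₁] (2*x₁-1)) (𝓝[Icc 0 1] 1) := by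
        rw [tendsto_nhdsWithin_iff]
        constructor
        · have h : Tendsto (fun t : ℝ => 2*x₁ - t) (𝓝 (2*x₁-1)) (𝓝 (2*x₁ - (2*x₁-1))) :=
            tendsto_const_nhds.sub tendsto_id
          rw [show 2*x₁ - (2*x₁-1) = 1 by ring] at h
          exact h.mono_left nhdsWithin_le_nhds
        · filter_upwards [self_mem_nhdsWithin] with t ht
          exact ⟨by linarith [ht.2, hx₁.2], by linarith [ht.1]⟩
      have h2 : Tendsto (fun t : ℝ => w (2*x₁ - t)) (𝓝[Ioo (2*x₁-1) x₁] (2*x₁-1)) (𝓝 0) := by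
        have hc0 : Tendsto w (𝓝[Icc (0:ℝ) 1] 1) (𝓝 (w 1)) :=
          hwc 1 ⟨zero_le_one, le_rfl⟩
        rw [hb1] at hc0
        exact hc0.comp hσt
      have h1' : Tendsto w (𝓝[Ioo (2*x₁-1) x₁] (2*x₁-1)) (𝓝 0) := by
        refine h2.congr' ?_
        filter_upwards [self_mem_nhdsWithin] with t ht
        exact (hsym t ⟨ht.1, by linarith [ht.2, hx₁.2]⟩).symm
      exact absurd (tendsto_nhds_unique h1 h1') (ne_of_gt (hpos _ haI))
  -- part 1 : deriv w > 0 on (0,1/2)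
  have part1 : ∀ x ∈ Ioo (0:ℝ) (1/2), 0 < deriv w x := by
    intro x hx
    by_contra hle
    push_neg at hle
    have hxI : x ∈ Ioo (0:ℝ) 1 := ⟨hx.1, by linarith [hx.2]⟩
    obtain ⟨c, hc, hc'⟩ := exists_hasDerivAt_eq_slope w (deriv w) hx.1
      (hwc.mono (Icc_subset_Icc le_rfl hxI.2.le))
      (fun y hy => hd1 y ⟨hy.1, lt_trans hy.2 hxI.2⟩)
    have hcpos : 0 < deriv w c := by
      rw [hc', hb0, sub_zero, sub_zero]
      exact div_pos (hpos x hxI) hx.1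
    have hcont' : ContinuousOn (deriv w) (Icc c x) :=
      hcontd.mono (fun y hy => ⟨lt_of_lt_of_le hc.1 hy.1, lt_of_le_of_lt hy.2 hxI.2⟩)
    obtain ⟨y, hy, hy0⟩ := intermediate_value_Icc' hc.2.le hcont' ⟨hle, hcpos.le⟩
    have hyI : y ∈ Ioo (0:ℝ) 1 := ⟨lt_of_lt_of_le hc.1 hy.1, by linarith [hy.2, hx.2]⟩
    exact nocrit y hyI (by intro h; rw [h] at hy; linarith [hy.2, hx.2]) hy0
  have part1' : ∀ x ∈ Ioo (1/2:ℝ) 1, deriv w x < 0 := by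
    intro x hx
    by_contra hge
    push_neg at hge
    have hxI : x ∈ Ioo (0:ℝ) 1 := ⟨by linarith [hx.1], hx.2⟩
    obtain ⟨c, hc, hc'⟩ := exists_hasDerivAt_eq_slope w (deriv w) hx.2
      (hwc.mono (Icc_subset_Icc hxI.1.le le_rfl))
      (fun y hy => hd1 y ⟨lt_trans hxI.1 hy.1, hy.2⟩)
    have hcneg : deriv w c < 0 := by
      rw [hc', hb1, zero_sub]
      apply div_neg_of_neg_of_pos (neg_neg_iff_pos.mpr (hpos x hxI)) (by linarith [hx.2])
    have hcont' : ContinuousOn (deriv w) (Icc x c) :=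
      hcontd.mono (fun y hy => ⟨lt_of_lt_of_le hxI.1 hy.1, lt_of_le_of_lt hy.2 hc.2⟩)
    obtain ⟨y, hy, hy0⟩ := intermediate_value_Icc' hc.1.le hcont' ⟨hcneg.le, hge⟩
    have hyI : y ∈ Ioo (0:ℝ) 1 := ⟨by linarith [hy.1, hx.1], lt_of_le_of_lt hy.2 hc.2⟩
    exact nocrit y hyI (by intro h; rw [h] at hy; linarith [hy.1, hx.1]) hy0
  refine ⟨part1, ?_⟩
  have mono : StrictMonoOn w (Icc (0:ℝ) (1/2)) := by
    apply strictMonoOn_of_deriv_pos (convex_Icc _ _)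
      (hwc.mono (Icc_subset_Icc le_rfl (by norm_num)))
    intro y hy; rw [interior_Icc] at hy; exact part1 y hy
  have anti : StrictAntiOn w (Icc (1/2:ℝ) 1) := by
    apply strictAntiOn_of_deriv_neg (convex_Icc _ _)
      (hwc.mono (Icc_subset_Icc (by norm_num) le_rfl))
    intro y hy; rw [interior_Icc] at hy; exact part1' y hy
  intro x hx
  rcases le_total x (1/2) with h | h
  · exact mono.monotoneOn ⟨hx.1, h⟩ ⟨by norm_num, le_rfl⟩ h
  · exact anti.antitoneOn ⟨le_rfl, by norm_num⟩ ⟨h, hx.2⟩ h
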